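/- Let α ∈ 𝕋_s^× be a unit of the Tate algebra and let x ∈ ℂ_∞^× satisfy ‖x − α‖_∞ < ‖α‖_∞. Then the infinite product ∏_{i=0}^∞ x^{q^i}/τ^i(α) converges in 𝕋_s^×, and if γ ∈ ℂ_∞ satisfies γ^{q−1} = x, the element ω(α) := γ · ∏_{i=0}^∞ x^{q^i}/τ^i(α) satisfies the functional equation τ(ω(α)) = α · ω(α). -/

import Mathlib

open Filter

noncomputable section

/-- Membership in the Tate algebra `𝕋_s` over `K`: the coefficients tend to `0`
(for every `ε > 0` only finitely many coefficients have norm `≥ ε`). -/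
def IsTate (K : Type) [NontriviallyNormedField K] (s : ℕ)
    (f : MvPowerSeries (Fin s) K) : Prop :=
  ∀ ε : ℝ, 0 < ε → {ν : Fin s →₀ ℕ | ε ≤ ‖MvPowerSeries.coeff (σ := Fin s) (R := K) ν f‖}.Finite

/-- The Gauss norm `‖f‖_∞ = sup_ν |a_ν|` on the Tate algebra. -/
def gaussNorm (K : Type) [NontriviallyNormedField K] (s : ℕ)
    (f : MvPowerSeries (Fin s) K) : ℝ :=
  ⨆ ν : Fin s →₀ ℕ, ‖MvPowerSeries.coeff (σ := Fin s) (R := K) ν f‖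

/-- The coefficient-wise twist of a power series induced by a ring endomorphism of `K`. -/
def twPS (K : Type) [NontriviallyNormedField K] (s : ℕ) (τK : K →+* K) :
    MvPowerSeries (Fin s) K →+* MvPowerSeries (Fin s) K :=
  MvPowerSeries.map (σ := Fin s) τK

namespace TateAux

open MvPowerSeries Pointwise

variable {K : Type} [NontriviallyNormedField K] {s : ℕ}

lemma gn_nonneg (f : MvPowerSeries (Fin s) K) : 0 ≤ _root_.gaussNorm K s f :=
  Real.iSup_nonneg fun _ => norm_nonneg _

lemma gn_le {f : MvPowerSeries (Fin s) K} {c : ℝ}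
    (h : ∀ ν, ‖coeff ν f‖ ≤ c) : _root_.gaussNorm K s f ≤ c :=
  ciSup_le h

lemma bdd {f : MvPowerSeries (Fin s) K} {c : ℝ} (h : ∀ ν, ‖coeff ν f‖ ≤ c) :
    BddAbove (Set.range fun ν : Fin s →₀ ℕ => ‖coeff ν f‖) :=
  ⟨c, by rintro r ⟨ν, rfl⟩; exact h ν⟩

lemma isTate_bound {f : MvPowerSeries (Fin s) K} (hf : IsTate K s f) :
    ∃ c : ℝ, ∀ ν, ‖coeff ν f‖ ≤ c := by
  classical
  refine ⟨1 + ∑ ν ∈ (hf 1 one_pos).toFinset, ‖coeff ν f‖, fun ν => ?_⟩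
  have hs : (0:ℝ) ≤ ∑ ν ∈ (hf 1 one_pos).toFinset, ‖coeff ν f‖ :=
    Finset.sum_nonneg fun i _ => norm_nonneg _
  by_cases hν : ν ∈ (hf 1 one_pos).toFinset
  · have := Finset.single_le_sum (f := fun ν => ‖coeff ν f‖)
      (fun i _ => norm_nonneg _) hν
    linarith
  · have h1 : ‖coeff ν f‖ < 1 := by
      by_contra hc
      exact hν ((Set.Finite.mem_toFinset _).mpr (le_of_not_gt hc))
    linarith

lemma coeff_le_gn {f : MvPowerSeries (Fin s) K} (hf : IsTate K s f) (ν : Fin s →₀ ℕ) :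
    ‖coeff ν f‖ ≤ _root_.gaussNorm K s f := by
  obtain ⟨c, hc⟩ := isTate_bound hf
  exact le_ciSup (bdd hc) ν

lemma gn_C (c : K) : _root_.gaussNorm K s (C (σ := Fin s) (R := K) c) = ‖c‖ := by
  classical
  have hb : ∀ ν, ‖coeff ν (C (σ := Fin s) (R := K) c)‖ ≤ ‖c‖ := by
    intro ν
    rw [coeff_C]
    split <;> simp
  apply le_antisymm (gn_le hb)
  have := le_ciSup (bdd hb) (0 : Fin s →₀ ℕ)
  simpa [coeff_zero_C, _root_.gaussNorm] using this

lemma norm_coeff_one_le (ν : Fin s →₀ ℕ) : ‖coeff ν (1 : MvPowerSeries (Fin s) K)‖ ≤ 1 := by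
  classical
  rw [coeff_one]
  split <;> simp

variable [IsUltrametricDist K]

lemma coeff_mul_le {f g : MvPowerSeries (Fin s) K} {A B : ℝ}
    (hA : 0 ≤ A) (hB : 0 ≤ B)
    (hf : ∀ ν, ‖coeff ν f‖ ≤ A) (hg : ∀ ν, ‖coeff ν g‖ ≤ B) (ν : Fin s →₀ ℕ) :
    ‖coeff ν (f * g)‖ ≤ A * B := by
  classical
  rw [coeff_mul]
  apply IsUltrametricDist.norm_sum_le_of_forall_le_of_nonneg (mul_nonneg hA hB)
  rintro ⟨a, b⟩ -
  rw [norm_mul]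
  exact mul_le_mul (hf a) (hg b) (norm_nonneg _) hA

lemma isTate_one : IsTate K s 1 := by
  classical
  intro ε hε
  refine (Set.finite_singleton (0 : Fin s →₀ ℕ)).subset fun ν hν => ?_
  simp only [Set.mem_setOf_eq] at hν
  by_contra h0
  rw [coeff_one, if_neg (by simpa using h0)] at hν
  simp at hν
  linarith

lemma isTate_add {f g : MvPowerSeries (Fin s) K} (hf : IsTate K s f) (hg : IsTate K s g) :
    IsTate K s (f + g) := by
  intro ε hε
  refine ((hf ε hε).union (hg ε hε)).subset fun ν hν => ?_
  simp only [Set.mem_setOf_eq, map_add] at hν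
  have := le_trans hν (IsUltrametricDist.norm_add_le_max (coeff ν f) (coeff ν g))
  rcases le_max_iff.mp this with h | h
  · exact Or.inl h
  · exact Or.inr h

lemma isTate_neg {f : MvPowerSeries (Fin s) K} (hf : IsTate K s f) : IsTate K s (-f) := by
  intro ε hε
  refine (hf ε hε).subset fun ν hν => ?_
  simpa using hν

lemma isTate_sub {f g : MvPowerSeries (Fin s) K} (hf : IsTate K s f) (hg : IsTate K s g) :
    IsTate K s (f - g) := by
  rw [sub_eq_add_neg]
  exact isTate_add hf (isTate_neg hg)

lemma isTate_C (c : K) : IsTate K s (C (σ := Fin s) (R := K) c) := by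
  classical
  intro ε hε
  refine (Set.finite_singleton (0 : Fin s →₀ ℕ)).subset fun ν hν => ?_
  simp only [Set.mem_setOf_eq] at hν
  by_contra h0
  rw [coeff_C, if_neg (by simpa using h0)] at hν
  simp at hν
  linarith

lemma isTate_mul {f g : MvPowerSeries (Fin s) K} (hf : IsTate K s f) (hg : IsTate K s g) :
    IsTate K s (f * g) := by
  classical
  intro ε hε
  obtain ⟨Af, hAf⟩ := isTate_bound hf
  obtain ⟨Bg, hBg⟩ := isTate_bound hg
  set A := max Af 1 with hA
  set B := max Bg 1 with hB
  have hA1 : (1:ℝ) ≤ A := le_max_right _ _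
  have hB1 : (1:ℝ) ≤ B := le_max_right _ _
  have hA0 : (0:ℝ) < A := lt_of_lt_of_le one_pos hA1
  have hB0 : (0:ℝ) < B := lt_of_lt_of_le one_pos hB1
  have hfA : ∀ ν, ‖coeff ν f‖ ≤ A := fun ν => (hAf ν).trans (le_max_left _ _)
  have hgB : ∀ ν, ‖coeff ν g‖ ≤ B := fun ν => (hBg ν).trans (le_max_left _ _)
  have hfin : ({a | ε / B ≤ ‖coeff a f‖} + {b | ε / A ≤ ‖coeff b g‖} :
      Set (Fin s →₀ ℕ)).Finite :=
    Set.Finite.add (hf _ (div_pos hε hB0)) (hg _ (div_pos hε hA0))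
  refine hfin.subset fun ν hν => ?_
  simp only [Set.mem_setOf_eq] at hν
  rw [coeff_mul] at hν
  have hne : (Finset.HasAntidiagonal.antidiagonal ν).Nonempty := ⟨(0, ν), by simp⟩
  obtain ⟨⟨a, b⟩, hmem, hle⟩ :=
    IsUltrametricDist.exists_norm_finset_sum_le_of_nonempty hne
      (fun p : (Fin s →₀ ℕ) × (Fin s →₀ ℕ) => coeff p.1 f * coeff p.2 g)
  have hab : a + b = ν := Finset.HasAntidiagonal.mem_antidiagonal.mp hmem
  have hεab : ε ≤ ‖coeff a f‖ * ‖coeff b g‖ := by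
    rw [← norm_mul]; exact hν.trans hle
  have ha : ε / B ≤ ‖coeff a f‖ := by
    rw [div_le_iff₀ hB0]
    calc ε ≤ ‖coeff a f‖ * ‖coeff b g‖ := hεab
    _ ≤ ‖coeff a f‖ * B := by
        exact mul_le_mul_of_nonneg_left (hgB b) (norm_nonneg _)
  have hb : ε / A ≤ ‖coeff b g‖ := by
    rw [div_le_iff₀ hA0]
    calc ε ≤ ‖coeff a f‖ * ‖coeff b g‖ := hεab
    _ ≤ A * ‖coeff b g‖ := mul_le_mul_of_nonneg_right (hfA a) (norm_nonneg _)
    _ = ‖coeff b g‖ * A := mul_comm _ _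
  exact Set.mem_add.mpr ⟨a, ha, b, hb, hab⟩

end TateAux
namespace TateAux

variable {K : Type} [NontriviallyNormedField K] {s : ℕ}

open MvPowerSeries Pointwise

section Twist

variable {q : ℕ} (τ0 : K →+* K)

lemma coeff_tw (f : MvPowerSeries (Fin s) K) (ν : Fin s →₀ ℕ) :
    coeff ν (twPS K s τ0 f) = τ0 (coeff ν f) := by
  simp [twPS, MvPowerSeries.coeff_map]

lemma norm_coeff_tw (hτ0 : ∀ c : K, τ0 c = c ^ q) (f : MvPowerSeries (Fin s) K)
    (ν : Fin s →₀ ℕ) : ‖coeff ν (twPS K s τ0 f)‖ = ‖coeff ν f‖ ^ q := by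
  rw [coeff_tw, hτ0, norm_pow]

lemma tw_C (hτ0 : ∀ c : K, τ0 c = c ^ q) (c : K) :
    twPS K s τ0 (C (σ := Fin s) (R := K) c) = C (σ := Fin s) (R := K) (c ^ q) := by
  rw [twPS, map_C, hτ0]

lemma tw_iter_C (hτ0 : ∀ c : K, τ0 c = c ^ q) (c : K) (N : ℕ) :
    (⇑(twPS K s τ0))^[N] (C (σ := Fin s) (R := K) c) = C (σ := Fin s) (R := K) (c ^ q ^ N) := by
  induction N with
  | zero => simp
  | succ N ih =>
    rw [Function.iterate_succ_apply', ih, tw_C τ0 hτ0, ← pow_mul, ← pow_succ]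

variable [IsUltrametricDist K]

lemma isTate_tw (hq1 : 1 ≤ q) (hτ0 : ∀ c : K, τ0 c = c ^ q)
    {f : MvPowerSeries (Fin s) K} (hf : IsTate K s f) : IsTate K s (twPS K s τ0 f) := by
  intro ε hε
  refine (hf (min ε 1) (lt_min hε one_pos)).subset fun ν hν => ?_
  simp only [Set.mem_setOf_eq] at hν ⊢
  rw [norm_coeff_tw τ0 hτ0] at hν
  by_contra hc
  push_neg at hc
  have h1 : ‖coeff ν f‖ ≤ 1 := le_of_lt (lt_of_lt_of_le hc (min_le_right _ _))
  have h2 : ‖coeff ν f‖ ^ q ≤ ‖coeff ν f‖ ^ 1 :=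
    pow_le_pow_of_le_one (norm_nonneg _) h1 hq1
  rw [pow_one] at h2
  exact absurd (hν.trans_lt (h2.trans_lt (hc.trans_le (min_le_left _ _)))) (lt_irrefl ε)

lemma isTate_tw_iter (hq1 : 1 ≤ q) (hτ0 : ∀ c : K, τ0 c = c ^ q)
    {f : MvPowerSeries (Fin s) K} (hf : IsTate K s f) (N : ℕ) :
    IsTate K s ((⇑(twPS K s τ0))^[N] f) := by
  induction N with
  | zero => exact hf
  | succ N ih => rw [Function.iterate_succ_apply']; exact isTate_tw τ0 hq1 hτ0 ih

lemma coeff_tw_iter_le (hτ0 : ∀ c : K, τ0 c = c ^ q) {f : MvPowerSeries (Fin s) K} {c : ℝ}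
    (hc : 0 ≤ c) (h : ∀ ν, ‖coeff ν f‖ ≤ c) (N : ℕ) (ν : Fin s →₀ ℕ) :
    ‖coeff ν ((⇑(twPS K s τ0))^[N] f)‖ ≤ c ^ q ^ N := by
  induction N generalizing ν with
  | zero => simpa using h ν
  | succ N ih =>
    rw [Function.iterate_succ_apply', norm_coeff_tw τ0 hτ0]
    calc ‖coeff ν ((⇑(twPS K s τ0))^[N] f)‖ ^ q ≤ (c ^ q ^ N) ^ q :=
      pow_le_pow_left₀ (norm_nonneg _) (ih ν) q
    _ = c ^ (q ^ N * q) := by rw [← pow_mul]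
    _ = c ^ q ^ (N + 1) := by rw [← pow_succ]

end Twist

/-- The partial products `∏_{i<N} y^{q^i} τ^i(β)`. -/
def pp (q : ℕ) (τ0 : K →+* K) (y : K) (β : MvPowerSeries (Fin s) K) (N : ℕ) :
    MvPowerSeries (Fin s) K :=
  ∏ i ∈ Finset.range N,
    (MvPowerSeries.C (σ := Fin s) (R := K) (y ^ q ^ i) * (⇑(twPS K s τ0))^[i] β)

lemma pp_succ (q : ℕ) (τ0 : K →+* K) (y : K) (β : MvPowerSeries (Fin s) K) (N : ℕ) :
    pp q τ0 y β (N + 1) =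
      pp q τ0 y β N * (C (σ := Fin s) (R := K) (y ^ q ^ N) * (⇑(twPS K s τ0))^[N] β) := by
  rw [pp, pp, Finset.prod_range_succ]

lemma pp_succ' {q : ℕ} (τ0 : K →+* K) (hτ0 : ∀ c : K, τ0 c = c ^ q)
    (y : K) (β : MvPowerSeries (Fin s) K) (N : ℕ) :
    pp q τ0 y β (N + 1) = (C (σ := Fin s) (R := K) y * β) * twPS K s τ0 (pp q τ0 y β N) := by
  rw [pp, pp, Finset.prod_range_succ', map_prod, mul_comm]
  congr 1
  · simp
  · refine (Finset.prod_congr rfl fun i _ => ?_).symm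
    rw [map_mul, tw_C τ0 hτ0, ← pow_mul, ← pow_succ, ← Function.iterate_succ_apply' (⇑(twPS K s τ0))]

lemma fac_eq {q : ℕ} (τ0 : K →+* K) (hτ0 : ∀ c : K, τ0 c = c ^ q)
    (y : K) (β : MvPowerSeries (Fin s) K) (N : ℕ) :
    C (σ := Fin s) (R := K) (y ^ q ^ N) * (⇑(twPS K s τ0))^[N] β =
      1 + (⇑(twPS K s τ0))^[N] (C (σ := Fin s) (R := K) y * β - 1) := by
  rw [iterate_map_sub, iterate_map_mul, iterate_map_one, tw_iter_C τ0 hτ0]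
  ring

end TateAux
namespace TateAux

variable {K : Type} [NontriviallyNormedField K] {s : ℕ}

open MvPowerSeries Pointwise Filter

lemma norm_sub_le_max' [IsUltrametricDist K] (a b : K) : ‖a - b‖ ≤ max ‖a‖ ‖b‖ := by
  rw [sub_eq_add_neg]
  refine le_trans (IsUltrametricDist.norm_add_le_max _ _) ?_
  rw [norm_neg]

lemma norm_coeff_sub_rev (f g : MvPowerSeries (Fin s) K) (ν : Fin s →₀ ℕ) :
    ‖coeff ν (f - g)‖ = ‖coeff ν (g - f)‖ := by
  rw [← norm_neg, ← map_neg, neg_sub]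

lemma prodLimit [IsUltrametricDist K] [CompleteSpace K] {q : ℕ} (hq2 : 2 ≤ q)
    (τ0 : K →+* K) (hτ0 : ∀ c : K, τ0 c = c ^ q)
    (y : K) {β : MvPowerSeries (Fin s) K} (hβ : IsTate K s β)
    {θ : ℝ} (hθ0 : 0 ≤ θ) (hθ1 : θ < 1)
    (hg : ∀ ν, ‖coeff ν (C (σ := Fin s) (R := K) y * β - 1)‖ ≤ θ) :
    ∃ w : MvPowerSeries (Fin s) K, IsTate K s w ∧
      (∀ N ν, ‖coeff ν (pp q τ0 y β N)‖ ≤ 1) ∧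
      ∀ N ν, ‖coeff ν (pp q τ0 y β N - w)‖ ≤ θ ^ N := by
  classical
  have hq1 : 1 ≤ q := by omega
  have hθle1 : θ ≤ 1 := hθ1.le
  set g : MvPowerSeries (Fin s) K := C (σ := Fin s) (R := K) y * β - 1 with hgdef
  set P : ℕ → MvPowerSeries (Fin s) K := pp q τ0 y β with hPdef
  have hPT : ∀ N, IsTate K s (P N) := by
    intro N
    induction N with
    | zero => simpa [hPdef, pp] using (isTate_one (K := K) (s := s))
    | succ N ih =>
      rw [hPdef, pp_succ]
      exact isTate_mul ih (isTate_mul (isTate_C _) (isTate_tw_iter τ0 hq1 hτ0 hβ N))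
  have hθpow1 : ∀ n : ℕ, θ ^ n ≤ 1 := fun n => pow_le_one₀ hθ0 hθle1
  have hPcoeff : ∀ N ν, ‖coeff ν (P N)‖ ≤ 1 := by
    intro N
    induction N with
    | zero =>
      intro ν
      have : P 0 = 1 := by simp [hPdef, pp]
      rw [this]
      exact norm_coeff_one_le ν
    | succ N ih =>
      intro ν
      have hfac : ∀ ν, ‖coeff ν (C (σ := Fin s) (R := K) (y ^ q ^ N) * (⇑(twPS K s τ0))^[N] β)‖ ≤ 1 := by
        intro ν
        rw [fac_eq τ0 hτ0, map_add]
        refine le_trans (IsUltrametricDist.norm_add_le_max _ _) (max_le (norm_coeff_one_le ν) ?_)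
        exact le_trans (coeff_tw_iter_le τ0 hτ0 hθ0 hg N ν) (hθpow1 _)
      rw [hPdef, pp_succ]
      simpa using coeff_mul_le zero_le_one zero_le_one ih hfac ν
  have hstep : ∀ N ν, ‖coeff ν (P (N + 1) - P N)‖ ≤ θ ^ N := by
    intro N ν
    have h1 : P (N + 1) - P N = P N * (⇑(twPS K s τ0))^[N] g := by
      rw [hPdef, pp_succ, fac_eq τ0 hτ0]
      ring
    rw [h1]
    have h2 := coeff_mul_le zero_le_one (pow_nonneg hθ0 (q ^ N)) (hPcoeff N)
      (coeff_tw_iter_le τ0 hτ0 hθ0 hg N) ν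
    rw [one_mul] at h2
    refine h2.trans (pow_le_pow_of_le_one hθ0 hθle1 ?_)
    exact (Nat.lt_pow_self (n := N) (by omega)).le
  have hdiff : ∀ N m, N ≤ m → ∀ ν, ‖coeff ν (P m - P N)‖ ≤ θ ^ N := by
    intro N m hNm
    induction m with
    | zero =>
      intro ν
      obtain rfl : N = 0 := Nat.le_zero.mp hNm
      simp [pow_nonneg hθ0]
    | succ m ih =>
      intro ν
      rcases Nat.lt_or_ge N (m + 1) with h | h
      · have hNm' : N ≤ m := Nat.lt_succ_iff.mp h
        have heq : coeff ν (P (m + 1) - P N)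
            = coeff ν (P (m + 1) - P m) + coeff ν (P m - P N) := by
          rw [← map_add]
          congr 1
          ring
        rw [heq]
        refine le_trans (IsUltrametricDist.norm_add_le_max _ _) (max_le ?_ (ih hNm' ν))
        exact (hstep m ν).trans (pow_le_pow_of_le_one hθ0 hθle1 hNm')
      · obtain rfl : N = m + 1 := le_antisymm hNm h
        simp [pow_nonneg hθ0]
  have hcau : ∀ ν, CauchySeq fun N => coeff ν (P N) := by
    intro ν
    apply cauchySeq_of_le_tendsto_0 (fun N => θ ^ N) ?_
      (tendsto_pow_atTop_nhds_zero_of_lt_one hθ0 hθ1)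
    intro n m N hn hm
    have key : ∀ a b : ℕ, N ≤ a → a ≤ b →
        dist (coeff ν (P a)) (coeff ν (P b)) ≤ θ ^ N := by
      intro a b ha hab
      rw [dist_eq_norm, ← map_sub]
      have h1 : coeff ν (P a) - coeff ν (P b) = coeff ν (P a - P b) := by
        rw [map_sub]
      have h2 : ‖coeff ν (P a - P b)‖ = ‖coeff ν (P b - P a)‖ := by
        rw [← norm_neg, ← map_neg]
        congr 1
        ring_nf
      rw [h2]
      exact (hdiff a b hab ν).trans (pow_le_pow_of_le_one hθ0 hθle1 ha)
    rcases le_total n m with h | h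
    · exact key n m hn h
    · rw [dist_comm]; exact key m n hm h
  set w : MvPowerSeries (Fin s) K :=
    fun ν => limUnder atTop (fun N => coeff ν (P N)) with hwdef
  have hwt : ∀ ν, Tendsto (fun N => coeff ν (P N)) atTop (nhds (coeff ν w)) := by
    intro ν
    have hcw : coeff ν w = limUnder atTop (fun N => coeff ν (P N)) := rfl
    rw [hcw]
    exact (hcau ν).tendsto_limUnder
  have hPw : ∀ N ν, ‖coeff ν (P N - w)‖ ≤ θ ^ N := by
    intro N ν
    rw [map_sub]
    have hlim : Tendsto (fun m => ‖coeff ν (P N) - coeff ν (P m)‖) atTop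
        (nhds ‖coeff ν (P N) - coeff ν w‖) := ((hwt ν).const_sub _).norm
    refine le_of_tendsto hlim ?_
    filter_upwards [eventually_ge_atTop N] with m hm
    have h2 : ‖coeff ν (P N) - coeff ν (P m)‖ = ‖coeff ν (P m - P N)‖ := by
      rw [← map_sub, ← norm_neg, ← map_neg]
      congr 1
      ring_nf
    rw [h2]
    exact hdiff N m hm ν
  refine ⟨w, ?_, hPcoeff, hPw⟩
  intro ε hε
  obtain ⟨N, hN⟩ := exists_pow_lt_of_lt_one hε hθ1
  refine ((hPT N) ε hε).subset fun ν hν => ?_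
  simp only [Set.mem_setOf_eq] at hν ⊢
  by_contra hc
  push_neg at hc
  have heq : coeff ν w = coeff ν (P N) - coeff ν (P N - w) := by
    rw [map_sub]
    ring
  have hb : ‖coeff ν w‖ ≤ max ‖coeff ν (P N)‖ ‖coeff ν (P N - w)‖ := by
    rw [heq, sub_eq_add_neg]
    refine le_trans (IsUltrametricDist.norm_add_le_max _ _) ?_
    rw [norm_neg]
  have h3 : ‖coeff ν (P N - w)‖ < ε := (hPw N ν).trans_lt hN
  rcases max_cases ‖coeff ν (P N)‖ ‖coeff ν (P N - w)‖ with ⟨he, _⟩ | ⟨he, _⟩ <;>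
    rw [he] at hb <;> linarith

end TateAux
open TateAux MvPowerSeries in
theorem stmt1
    (K : Type) [NontriviallyNormedField K] [IsUltrametricDist K] [CompleteSpace K]
    (q : ℕ) (hq : IsPrimePow q)
    (τK : K ≃+* K) (hτK : ∀ x : K, τK x = x ^ q)
    (s : ℕ)
    (α β : MvPowerSeries (Fin s) K) (hα : IsTate K s α) (hβ : IsTate K s β)
    (hαβ : α * β = 1)
    (x : K) (hx0 : x ≠ 0)
    (hx : _root_.gaussNorm K s (MvPowerSeries.C (σ := Fin s) (R := K) x - α) < _root_.gaussNorm K s α) :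
    ∃ w : MvPowerSeries (Fin s) K, IsTate K s w ∧
      (∃ w' : MvPowerSeries (Fin s) K, IsTate K s w' ∧ w * w' = 1) ∧
      Filter.Tendsto (fun N : ℕ =>
          _root_.gaussNorm K s ((∏ i ∈ Finset.range N,
            (MvPowerSeries.C (σ := Fin s) (R := K) (x ^ q ^ i) *
              (⇑(twPS K s τK.toRingHom))^[i] β)) - w))
        Filter.atTop (nhds 0) ∧
      (∀ γ : K, γ ^ (q - 1) = x →
        twPS K s τK.toRingHom (MvPowerSeries.C (σ := Fin s) (R := K) γ * w)
          = α * (MvPowerSeries.C (σ := Fin s) (R := K) γ * w)) := by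
  classical
  have hq2 : 2 ≤ q := hq.two_le
  have hq1 : 1 ≤ q := by omega
  set τ0 : K →+* K := τK.toRingHom with hτ0def
  have hτ0 : ∀ c : K, τ0 c = c ^ q := fun c => hτK c
  -- basic norm facts
  have hCxA : IsTate K s (MvPowerSeries.C (σ := Fin s) (R := K) x - α) := isTate_sub (isTate_C x) hα
  have hr0 : 0 ≤ _root_.gaussNorm K s (MvPowerSeries.C (σ := Fin s) (R := K) x - α) := gn_nonneg _
  have hA0 : 0 < _root_.gaussNorm K s α := lt_of_le_of_lt hr0 hx
  have h1 : _root_.gaussNorm K s (MvPowerSeries.C (σ := Fin s) (R := K) x) ≤ _root_.gaussNorm K s α := by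
    apply gn_le
    intro ν
    have heq : coeff ν (MvPowerSeries.C (σ := Fin s) (R := K) x)
        = coeff ν α + coeff ν (MvPowerSeries.C (σ := Fin s) (R := K) x - α) := by
      rw [← map_add]; congr 1; ring
    rw [heq]
    refine le_trans (IsUltrametricDist.norm_add_le_max _ _)
      (max_le (coeff_le_gn hα ν) ?_)
    exact (coeff_le_gn hCxA ν).trans hx.le
  have h2 : _root_.gaussNorm K s α ≤ max (_root_.gaussNorm K s (MvPowerSeries.C (σ := Fin s) (R := K) x))
      (_root_.gaussNorm K s (MvPowerSeries.C (σ := Fin s) (R := K) x - α)) := by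
    apply gn_le
    intro ν
    have heq : coeff ν α = coeff ν (MvPowerSeries.C (σ := Fin s) (R := K) x)
        - coeff ν (MvPowerSeries.C (σ := Fin s) (R := K) x - α) := by
      rw [← map_sub]; congr 1; ring
    rw [heq]
    exact le_trans (norm_sub_le_max' _ _)
      (max_le_max (coeff_le_gn (isTate_C x) ν) (coeff_le_gn hCxA ν))
  have hxa : ‖x‖ = _root_.gaussNorm K s α := by
    have h1' : ‖x‖ ≤ _root_.gaussNorm K s α := by rw [← gn_C (s := s) x]; exact h1
    refine le_antisymm h1' ?_
    by_contra hlt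
    push_neg at hlt
    have h2' := h2
    rw [gn_C] at h2'
    exact absurd (h2'.trans_lt (max_lt hlt hx)) (lt_irrefl _)
  have hxpos : (0:ℝ) < ‖x‖ := by rw [hxa]; exact hA0
  set θ : ℝ := ‖x‖⁻¹ * _root_.gaussNorm K s (MvPowerSeries.C (σ := Fin s) (R := K) x - α) with hθdef
  have hθ0 : 0 ≤ θ := mul_nonneg (inv_nonneg.mpr (norm_nonneg _)) hr0
  have hθ1 : θ < 1 := by
    have h := mul_lt_mul_of_pos_left hx (inv_pos.mpr hxpos)
    rw [← hxa, inv_mul_cancel₀ (ne_of_gt hxpos)] at h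
    exact h
  have hθpow1 : ∀ n : ℕ, θ ^ n ≤ 1 := fun n => pow_le_one₀ hθ0 hθ1.le
  -- the inverse-side factor
  have hCinv : MvPowerSeries.C (σ := Fin s) (R := K) x⁻¹ * MvPowerSeries.C (σ := Fin s) (R := K) x = 1 := by
    rw [← map_mul, inv_mul_cancel₀ hx0, map_one]
  have hCx2 : MvPowerSeries.C (σ := Fin s) (R := K) x * MvPowerSeries.C (σ := Fin s) (R := K) x⁻¹ = 1 := by
    rw [← map_mul, mul_inv_cancel₀ hx0, map_one]
  have hid : MvPowerSeries.C (σ := Fin s) (R := K) x⁻¹ * α - 1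
      = MvPowerSeries.C (σ := Fin s) (R := K) x⁻¹ * (α - MvPowerSeries.C (σ := Fin s) (R := K) x) := by
    linear_combination hCinv
  have hh : ∀ ν, ‖coeff ν (MvPowerSeries.C (σ := Fin s) (R := K) x⁻¹ * α - 1)‖ ≤ θ := by
    intro ν
    rw [hid, coeff_C_mul, norm_mul, norm_inv]
    refine mul_le_mul_of_nonneg_left ?_ (inv_nonneg.mpr (norm_nonneg x))
    have heq : ‖coeff ν (α - MvPowerSeries.C (σ := Fin s) (R := K) x)‖
        = ‖coeff ν (MvPowerSeries.C (σ := Fin s) (R := K) x - α)‖ := norm_coeff_sub_rev _ _ ν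
    rw [heq]
    exact coeff_le_gn hCxA ν
  -- the direct-side factor
  have hgT : IsTate K s (MvPowerSeries.C (σ := Fin s) (R := K) x * β - 1) :=
    isTate_sub (isTate_mul (isTate_C x) hβ) isTate_one
  have key : (MvPowerSeries.C (σ := Fin s) (R := K) x * β - 1)
      = -(MvPowerSeries.C (σ := Fin s) (R := K) x⁻¹ * α - 1)
        - (MvPowerSeries.C (σ := Fin s) (R := K) x * β - 1) * (MvPowerSeries.C (σ := Fin s) (R := K) x⁻¹ * α - 1) := by
    linear_combination (MvPowerSeries.C (σ := Fin s) (R := K) x * MvPowerSeries.C (σ := Fin s) (R := K) x⁻¹) * hαβ + hCx2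
  obtain ⟨δ, hδdef⟩ : ∃ δ : ℝ, δ = _root_.gaussNorm K s (MvPowerSeries.C (σ := Fin s) (R := K) x * β - 1) :=
    ⟨_, rfl⟩
  have hδ0 : 0 ≤ δ := hδdef ▸ gn_nonneg _
  have hgc : ∀ ν, ‖coeff ν (MvPowerSeries.C (σ := Fin s) (R := K) x * β - 1)‖
      ≤ δ := hδdef ▸ coeff_le_gn hgT
  have hmax : _root_.gaussNorm K s (MvPowerSeries.C (σ := Fin s) (R := K) x * β - 1)
      ≤ max θ (δ * θ) := by
    apply gn_le
    intro ν
    rw [key]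
    have h1' : coeff ν (-(MvPowerSeries.C (σ := Fin s) (R := K) x⁻¹ * α - 1)
        - (MvPowerSeries.C (σ := Fin s) (R := K) x * β - 1) * (MvPowerSeries.C (σ := Fin s) (R := K) x⁻¹ * α - 1))
        = (- coeff ν (MvPowerSeries.C (σ := Fin s) (R := K) x⁻¹ * α - 1))
          - coeff ν ((MvPowerSeries.C (σ := Fin s) (R := K) x * β - 1)
            * (MvPowerSeries.C (σ := Fin s) (R := K) x⁻¹ * α - 1)) := by
      rw [map_sub, map_neg]
    rw [h1']
    refine le_trans (norm_sub_le_max' _ _) (max_le_max ?_ ?_)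
    · rw [norm_neg]; exact hh ν
    · exact coeff_mul_le hδ0 hθ0 hgc hh ν
  have hδθ : δ ≤ θ := by
    rw [← hδdef] at hmax
    rcases max_cases θ (δ * θ) with ⟨he, _⟩ | ⟨he, _⟩ <;> rw [he] at hmax
    · exact hmax
    · nlinarith
  have hgc' : ∀ ν, ‖coeff ν (MvPowerSeries.C (σ := Fin s) (R := K) x * β - 1)‖ ≤ θ :=
    fun ν => (hgc ν).trans hδθ
  -- the two limits
  obtain ⟨w, hwT, hPc, hwP⟩ := prodLimit hq2 τ0 hτ0 x hβ hθ0 hθ1 hgc'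
  obtain ⟨w', hw'T, hQc, hw'P⟩ := prodLimit hq2 τ0 hτ0 x⁻¹ hα hθ0 hθ1 hh
  have hwc : ∀ ν, ‖coeff ν w‖ ≤ 1 := by
    intro ν
    have heq : coeff ν w = coeff ν (pp q τ0 x β 0) - coeff ν (pp q τ0 x β 0 - w) := by
      rw [map_sub]; ring
    rw [heq]
    refine le_trans (norm_sub_le_max' _ _) (max_le (hPc 0 ν) ?_)
    exact (hwP 0 ν).trans (by norm_num)
  -- partial products are mutually inverse
  have hQP1 : ∀ N, pp q τ0 x β N * pp q τ0 x⁻¹ α N = 1 := by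
    intro N
    induction N with
    | zero => simp [pp]
    | succ N ih =>
      rw [pp_succ, pp_succ, mul_mul_mul_comm, ih, one_mul, mul_mul_mul_comm,
        ← map_mul, ← iterate_map_mul]
      have hc : (x ^ q ^ N) * (x⁻¹ ^ q ^ N) = 1 := by
        rw [← mul_pow, mul_inv_cancel₀ hx0, one_pow]
      have hβα : β * α = 1 := by rw [mul_comm]; exact hαβ
      rw [hc, map_one, hβα, iterate_map_one, one_mul]
  have hunit : w * w' = 1 := by
    have hcoeffz : ∀ ν, coeff ν (w * w' - 1) = 0 := by
      intro ν
      have hb : ∀ N : ℕ, ‖coeff ν (w * w' - 1)‖ ≤ θ ^ N := by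
        intro N
        have keyN : w * w' - 1 = w * (w' - pp q τ0 x⁻¹ α N)
            + (w - pp q τ0 x β N) * pp q τ0 x⁻¹ α N := by
          linear_combination hQP1 N
        rw [keyN, map_add]
        refine le_trans (IsUltrametricDist.norm_add_le_max _ _) (max_le ?_ ?_)
        · have hsw : ∀ ν, ‖coeff ν (w' - pp q τ0 x⁻¹ α N)‖ ≤ θ ^ N := by
            intro ν
            rw [norm_coeff_sub_rev]
            exact hw'P N ν
          have := coeff_mul_le zero_le_one (pow_nonneg hθ0 N) hwc hsw ν
          simpa using this
        · have hsw : ∀ ν, ‖coeff ν (w - pp q τ0 x β N)‖ ≤ θ ^ N := by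
            intro ν
            rw [norm_coeff_sub_rev]
            exact hwP N ν
          have := coeff_mul_le (pow_nonneg hθ0 N) zero_le_one hsw (hQc N) ν
          simpa using this
      have h0 : ‖coeff ν (w * w' - 1)‖ ≤ 0 :=
        ge_of_tendsto (tendsto_pow_atTop_nhds_zero_of_lt_one hθ0 hθ1)
          (Filter.Eventually.of_forall hb)
      exact norm_le_zero_iff.mp h0
    have hz : w * w' - 1 = 0 := MvPowerSeries.ext fun ν => by
      rw [map_zero]; exact hcoeffz ν
    exact sub_eq_zero.mp hz
  -- the functional equation core : C x * β * τ(w) = w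
  have hTwdiff : ∀ N ν,
      ‖coeff ν (twPS K s τ0 w - twPS K s τ0 (pp q τ0 x β N))‖ ≤ θ ^ N := by
    intro N ν
    rw [← map_sub, norm_coeff_tw τ0 hτ0]
    have h1' : ‖coeff ν (w - pp q τ0 x β N)‖ ≤ θ ^ N := by
      rw [norm_coeff_sub_rev]
      exact hwP N ν
    calc ‖coeff ν (w - pp q τ0 x β N)‖ ^ q ≤ (θ ^ N) ^ q :=
      pow_le_pow_left₀ (norm_nonneg _) h1' q
    _ ≤ (θ ^ N) ^ 1 := pow_le_pow_of_le_one (pow_nonneg hθ0 N) (hθpow1 N) hq1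
    _ = θ ^ N := pow_one _
  set Bβ : ℝ := max (_root_.gaussNorm K s β) 1 with hBβdef
  have hβc : ∀ ν, ‖coeff ν β‖ ≤ Bβ := fun ν => (coeff_le_gn hβ ν).trans (le_max_left _ _)
  have hBβ0 : 0 ≤ Bβ := le_trans zero_le_one (le_max_right _ _)
  have hBc : ∀ ν, ‖coeff ν (MvPowerSeries.C (σ := Fin s) (R := K) x * β)‖ ≤ ‖x‖ * Bβ := by
    intro ν
    rw [coeff_C_mul, norm_mul]
    exact mul_le_mul_of_nonneg_left (hβc ν) (norm_nonneg x)
  have hE : MvPowerSeries.C (σ := Fin s) (R := K) x * β * twPS K s τ0 w = w := by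
    have hcz : ∀ ν, coeff ν (MvPowerSeries.C (σ := Fin s) (R := K) x * β * twPS K s τ0 w - w) = 0 := by
      intro ν
      have hb : ∀ N : ℕ, ‖coeff ν (MvPowerSeries.C (σ := Fin s) (R := K) x * β * twPS K s τ0 w - w)‖
          ≤ (‖x‖ * Bβ + 1) * θ ^ N := by
        intro N
        have keyN : MvPowerSeries.C (σ := Fin s) (R := K) x * β * twPS K s τ0 w - w
            = (MvPowerSeries.C (σ := Fin s) (R := K) x * β)
                * (twPS K s τ0 w - twPS K s τ0 (pp q τ0 x β N))
              + (pp q τ0 x β (N + 1) - w) := by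
          rw [pp_succ' τ0 hτ0]
          ring
        rw [keyN, map_add]
        refine le_trans (IsUltrametricDist.norm_add_le_max _ _) (max_le ?_ ?_)
        · have := coeff_mul_le (mul_nonneg (norm_nonneg x) hBβ0) (pow_nonneg hθ0 N)
            hBc (hTwdiff N) ν
          refine this.trans ?_
          nlinarith [pow_nonneg hθ0 N]
        · refine (hwP (N + 1) ν).trans ?_
          have : θ ^ (N + 1) ≤ θ ^ N := pow_le_pow_of_le_one hθ0 hθ1.le (by omega)
          nlinarith [pow_nonneg hθ0 N, mul_nonneg (norm_nonneg x) hBβ0]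
      have htend : Filter.Tendsto (fun N : ℕ => (‖x‖ * Bβ + 1) * θ ^ N)
          Filter.atTop (nhds 0) := by
        have := (tendsto_pow_atTop_nhds_zero_of_lt_one hθ0 hθ1).const_mul (‖x‖ * Bβ + 1)
        simpa using this
      have h0 := ge_of_tendsto htend (Filter.Eventually.of_forall hb)
      exact norm_le_zero_iff.mp h0
    have hz : MvPowerSeries.C (σ := Fin s) (R := K) x * β * twPS K s τ0 w - w = 0 :=
      MvPowerSeries.ext fun ν => by rw [map_zero]; exact hcz ν
    exact sub_eq_zero.mp hz
  have hkey : α * w = MvPowerSeries.C (σ := Fin s) (R := K) x * twPS K s τ0 w := by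
    calc α * w = α * (MvPowerSeries.C (σ := Fin s) (R := K) x * β * twPS K s τ0 w) := by rw [hE]
    _ = (MvPowerSeries.C (σ := Fin s) (R := K) x * twPS K s τ0 w) * (α * β) := by ring
    _ = MvPowerSeries.C (σ := Fin s) (R := K) x * twPS K s τ0 w := by rw [hαβ, mul_one]
  refine ⟨w, hwT, ⟨w', hw'T, hunit⟩, ?_, ?_⟩
  · exact squeeze_zero (fun N => gn_nonneg _) (fun N => gn_le (hwP N))
      (tendsto_pow_atTop_nhds_zero_of_lt_one hθ0 hθ1)
  · intro γ hγ
    have hq1' : q - 1 + 1 = q := by omega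
    have hγq : γ ^ q = γ * x := by
      calc γ ^ q = γ ^ (q - 1 + 1) := by rw [hq1']
      _ = γ ^ (q - 1) * γ := pow_succ γ (q - 1)
      _ = γ * x := by rw [hγ, mul_comm]
    rw [map_mul, tw_C τ0 hτ0, hγq, map_mul]
    calc MvPowerSeries.C (σ := Fin s) (R := K) γ * MvPowerSeries.C (σ := Fin s) (R := K) x * twPS K s τ0 w
        = MvPowerSeries.C (σ := Fin s) (R := K) γ * (MvPowerSeries.C (σ := Fin s) (R := K) x * twPS K s τ0 w) := by ring
    _ = MvPowerSeries.C (σ := Fin s) (R := K) γ * (α * w) := by rw [← hkey]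
    _ = α * (MvPowerSeries.C (σ := Fin s) (R := K) γ * w) := by ring
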